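/- arXiv:math-ph/0503002 — 2 statements merged into one kernel-verified Lean document; each statement's English description precedes it below -/
import Mathlib

section
/- For the Lie–Poisson algebra g^(N), the functions C_k(y) = Σ_{i=k−1}^{N−1} ⟨y_i, y_{N+k−i−2}⟩ for k = 1,…,N are Casimir functions: {C_k, y_j^β} = 0 for all basis coordinates y_j^β. -/
open Matrix

noncomputable section

/-- Gradient of `f` with respect to the `i`-th `ℝ³`-block of coordinates. -/
def gradBlock (N : ℕ) (f : (Fin N → (Fin 3 → ℝ)) → ℝ) (p : Fin N → (Fin 3 → ℝ))
    (i : Fin N) : Fin 3 → ℝ :=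
  fun a => fderiv ℝ f p (Pi.single i (Pi.single a 1))

/-- The Lie–Poisson bracket of `g^(N)`:
`{f,g}(p) = ∑_{i+j<N} ⟨ p_{i+j}, ∇_i f ∧ ∇_j g ⟩`, which is the extension by the
Leibniz rule of the coordinate brackets `{y_i^α, y_j^β} = ε^{αβ}_γ y_{i+j}^γ`
(for `i+j < N`, zero otherwise). -/
def liePoisson (N : ℕ) (f g : (Fin N → (Fin 3 → ℝ)) → ℝ)
    (p : Fin N → (Fin 3 → ℝ)) : ℝ :=
  ∑ i : Fin N, ∑ j : Fin N,
    if h : (i : ℕ) + (j : ℕ) < N then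
      (p ⟨(i : ℕ) + (j : ℕ), h⟩) ⬝ᵥ ((gradBlock N f p i) ⨯₃ (gradBlock N g p j))
    else 0

/-- `C_k(y) = ∑_{i=k-1}^{N-1} ⟨ y_i, y_{N+k-i-2} ⟩`, written as a sum over the
pairs `(i,m)` with `i + m = N + k - 2` and `i ≥ k - 1`. -/
def CasN (N k : ℕ) (p : Fin N → (Fin 3 → ℝ)) : ℝ :=
  ∑ i : Fin N, ∑ m : Fin N,
    if (i : ℕ) + (m : ℕ) + 2 = N + k ∧ k ≤ (i : ℕ) + 1 then (p i) ⬝ᵥ (p m) else 0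

def proj2 (N : ℕ) (i : Fin N) (a : Fin 3) : (Fin N → Fin 3 → ℝ) →L[ℝ] ℝ :=
  (ContinuousLinearMap.proj (R := ℝ) (φ := fun _ : Fin 3 => ℝ) a).comp
    (ContinuousLinearMap.proj (R := ℝ) (φ := fun _ : Fin N => Fin 3 → ℝ) i)

lemma proj2_apply (N : ℕ) (i : Fin N) (a : Fin 3) (q : Fin N → Fin 3 → ℝ) :
    proj2 N i a q = q i a := rfl

lemma hasFDerivAt_dot (N : ℕ) (i m : Fin N) (p : Fin N → Fin 3 → ℝ) :
    HasFDerivAt (fun q : Fin N → Fin 3 → ℝ => q i ⬝ᵥ q m)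
      (∑ a : Fin 3, ((p i a) • proj2 N m a + (p m a) • proj2 N i a)) p := by
  have h : (fun q : Fin N → Fin 3 → ℝ => q i ⬝ᵥ q m)
      = fun q => ∑ a : Fin 3, (proj2 N i a) q * (proj2 N m a) q := by
    funext q; simp [dotProduct, proj2_apply]
  rw [h]
  exact HasFDerivAt.fun_sum fun a _ =>
    ((proj2 N i a).hasFDerivAt.mul (proj2 N m a).hasFDerivAt)

def DCas (N k : ℕ) (p : Fin N → Fin 3 → ℝ) : (Fin N → Fin 3 → ℝ) →L[ℝ] ℝ :=
  ∑ i : Fin N, ∑ m : Fin N,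
    if (i : ℕ) + (m : ℕ) + 2 = N + k ∧ k ≤ (i : ℕ) + 1 then
      (∑ a : Fin 3, ((p i a) • proj2 N m a + (p m a) • proj2 N i a)) else 0

lemma hasFDerivAt_CasN (N k : ℕ) (p : Fin N → Fin 3 → ℝ) :
    HasFDerivAt (CasN N k) (DCas N k p) p := by
  unfold CasN DCas
  apply HasFDerivAt.fun_sum; intro i _
  apply HasFDerivAt.fun_sum; intro m _
  by_cases h : (i : ℕ) + (m : ℕ) + 2 = N + k ∧ k ≤ (i : ℕ) + 1
  · simpa [h] using hasFDerivAt_dot N i m p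
  · simpa [h] using hasFDerivAt_const (0 : ℝ) p

lemma gradBlock_CasN (N k : ℕ) (hk1 : 1 ≤ k) (hkN : k ≤ N) (p : Fin N → Fin 3 → ℝ)
    (l : Fin N) :
    gradBlock N (CasN N k) p l =
      if h : k ≤ (l : ℕ) + 1 then
        (2 : ℝ) • p ⟨N + k - 2 - (l : ℕ), by omega⟩ else 0 := by
  funext a
  unfold gradBlock
  rw [(hasFDerivAt_CasN N k p).fderiv]
  have hv : ∀ (i : Fin N) (a' : Fin 3),
      (Pi.single l (Pi.single a (1:ℝ)) : Fin N → Fin 3 → ℝ) i a'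
        = if i = l ∧ a' = a then 1 else 0 := by
    intro i a'
    by_cases h1 : i = l <;> by_cases h2 : a' = a <;>
      simp [Pi.single_apply, h1, h2]
  have hDC : (DCas N k p) (Pi.single l (Pi.single a 1))
      = ∑ i : Fin N, ∑ m : Fin N,
          if (i : ℕ) + (m : ℕ) + 2 = N + k ∧ k ≤ (i : ℕ) + 1 then
            ((if m = l then p i a else 0) + (if i = l then p m a else 0)) else 0 := by
    unfold DCas
    rw [ContinuousLinearMap.sum_apply]
    refine Finset.sum_congr rfl fun i _ => ?_
    rw [ContinuousLinearMap.sum_apply]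
    refine Finset.sum_congr rfl fun m _ => ?_
    by_cases h : (i : ℕ) + (m : ℕ) + 2 = N + k ∧ k ≤ (i : ℕ) + 1
    · rw [if_pos h, if_pos h]
      rw [ContinuousLinearMap.sum_apply]
      have : ∀ a' : Fin 3,
          ((p i a') • proj2 N m a' + (p m a') • proj2 N i a')
            (Pi.single l (Pi.single a 1))
          = p i a' * (if m = l ∧ a' = a then 1 else 0)
            + p m a' * (if i = l ∧ a' = a then 1 else 0) := by
        intro a'
        simp [proj2_apply, hv]
      rw [Finset.sum_congr rfl fun a' _ => this a', Finset.sum_add_distrib]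
      congr 1
      · by_cases h1 : m = l <;> simp [h1]
      · by_cases h2 : i = l <;> simp [h2]
    · simp [h]
  rw [hDC]
  have hsplit : ∀ i m : Fin N,
      (if (i:ℕ) + (m:ℕ) + 2 = N + k ∧ k ≤ (i:ℕ) + 1 then
        ((if m = l then p i a else 0) + (if i = l then p m a else 0)) else 0)
      = (if (i:ℕ) + (m:ℕ) + 2 = N + k ∧ k ≤ (i:ℕ) + 1 then
          (if m = l then p i a else 0) else 0)
        + (if (i:ℕ) + (m:ℕ) + 2 = N + k ∧ k ≤ (i:ℕ) + 1 then
          (if i = l then p m a else 0) else 0) := by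
    intro i m; split_ifs <;> simp
  have step1 : (∑ i : Fin N, ∑ m : Fin N,
      if (i:ℕ) + (m:ℕ) + 2 = N + k ∧ k ≤ (i:ℕ) + 1 then
        ((if m = l then p i a else 0) + (if i = l then p m a else 0)) else 0)
      = (∑ i : Fin N, ∑ m : Fin N,
          if (i:ℕ) + (m:ℕ) + 2 = N + k ∧ k ≤ (i:ℕ) + 1 then
            (if m = l then p i a else 0) else 0)
        + (∑ i : Fin N, ∑ m : Fin N,
          if (i:ℕ) + (m:ℕ) + 2 = N + k ∧ k ≤ (i:ℕ) + 1 then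
            (if i = l then p m a else 0) else 0) := by
    rw [← Finset.sum_add_distrib]
    refine Finset.sum_congr rfl fun i _ => ?_
    rw [← Finset.sum_add_distrib]
    exact Finset.sum_congr rfl fun m _ => hsplit i m
  rw [step1]
  have hA : ∀ i : Fin N, (∑ m : Fin N,
      if (i:ℕ) + (m:ℕ) + 2 = N + k ∧ k ≤ (i:ℕ) + 1 then
        (if m = l then p i a else 0) else 0)
      = if (i:ℕ) + (l:ℕ) + 2 = N + k ∧ k ≤ (i:ℕ) + 1 then p i a else 0 := by
    intro i
    have h1 : ∀ m : Fin N, (if (i:ℕ) + (m:ℕ) + 2 = N + k ∧ k ≤ (i:ℕ) + 1 then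
        (if m = l then p i a else 0) else 0)
        = if m = l then (if (i:ℕ) + (l:ℕ) + 2 = N + k ∧ k ≤ (i:ℕ) + 1 then p i a else 0)
          else 0 := by
      intro m; by_cases hm : m = l
      · subst hm; simp
      · simp [hm]
    rw [Finset.sum_congr rfl fun m _ => h1 m, Finset.sum_ite_eq' Finset.univ l]
    simp
  rw [Finset.sum_congr rfl fun i _ => hA i]
  have hB : (∑ i : Fin N, ∑ m : Fin N,
      if (i:ℕ) + (m:ℕ) + 2 = N + k ∧ k ≤ (i:ℕ) + 1 then
        (if i = l then p m a else 0) else 0)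
      = ∑ m : Fin N, if (l:ℕ) + (m:ℕ) + 2 = N + k ∧ k ≤ (l:ℕ) + 1 then p m a else 0 := by
    have h1 : ∀ i : Fin N, (∑ m : Fin N,
        if (i:ℕ) + (m:ℕ) + 2 = N + k ∧ k ≤ (i:ℕ) + 1 then
          (if i = l then p m a else 0) else 0)
        = if i = l then (∑ m : Fin N,
            if (l:ℕ) + (m:ℕ) + 2 = N + k ∧ k ≤ (l:ℕ) + 1 then p m a else 0) else 0 := by
      intro i; by_cases hi : i = l
      · subst hi; simp
      · simp [hi]
    rw [Finset.sum_congr rfl fun i _ => h1 i, Finset.sum_ite_eq' Finset.univ l]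
    simp
  rw [hB]
  by_cases hl : k ≤ (l:ℕ) + 1
  · rw [dif_pos hl]
    have hlN := l.isLt
    have hbd : N + k - 2 - (l:ℕ) < N := by omega
    have e1 : (∑ i : Fin N,
        if (i:ℕ) + (l:ℕ) + 2 = N + k ∧ k ≤ (i:ℕ) + 1 then p i a else 0)
        = p ⟨N + k - 2 - (l:ℕ), hbd⟩ a := by
      have h1 : ∀ i : Fin N, (if (i:ℕ) + (l:ℕ) + 2 = N + k ∧ k ≤ (i:ℕ) + 1
          then p i a else 0)
          = if i = ⟨N + k - 2 - (l:ℕ), hbd⟩ then p i a else 0 := by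
        intro i
        have hiN := i.isLt
        refine if_congr ?_ rfl rfl
        rw [Fin.ext_iff]
        show _ ↔ (i:ℕ) = N + k - 2 - (l:ℕ)
        omega
      rw [Finset.sum_congr rfl fun i _ => h1 i,
        Finset.sum_ite_eq' Finset.univ (⟨N + k - 2 - (l:ℕ), hbd⟩ : Fin N)]
      simp
    have e2 : (∑ m : Fin N,
        if (l:ℕ) + (m:ℕ) + 2 = N + k ∧ k ≤ (l:ℕ) + 1 then p m a else 0)
        = p ⟨N + k - 2 - (l:ℕ), hbd⟩ a := by
      have h1 : ∀ m : Fin N, (if (l:ℕ) + (m:ℕ) + 2 = N + k ∧ k ≤ (l:ℕ) + 1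
          then p m a else 0)
          = if m = ⟨N + k - 2 - (l:ℕ), hbd⟩ then p m a else 0 := by
        intro m
        have hmN := m.isLt
        refine if_congr ?_ rfl rfl
        rw [Fin.ext_iff]
        show _ ↔ (m:ℕ) = N + k - 2 - (l:ℕ)
        omega
      rw [Finset.sum_congr rfl fun m _ => h1 m,
        Finset.sum_ite_eq' Finset.univ (⟨N + k - 2 - (l:ℕ), hbd⟩ : Fin N)]
      simp
    rw [e1, e2]
    simp [two_mul]
  · rw [dif_neg hl]
    have hlN := l.isLt
    have e1 : (∑ i : Fin N,
        if (i:ℕ) + (l:ℕ) + 2 = N + k ∧ k ≤ (i:ℕ) + 1 then p i a else 0) = 0 := by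
      refine Finset.sum_eq_zero fun i _ => ?_
      have hiN := i.isLt
      rw [if_neg]; omega
    have e2 : (∑ m : Fin N,
        if (l:ℕ) + (m:ℕ) + 2 = N + k ∧ k ≤ (l:ℕ) + 1 then p m a else 0) = 0 := by
      refine Finset.sum_eq_zero fun m _ => ?_
      rw [if_neg]; omega
    rw [e1, e2]
    simp

lemma gradBlock_coord (N : ℕ) (j : Fin N) (β : Fin 3) (p : Fin N → Fin 3 → ℝ)
    (i : Fin N) :
    gradBlock N (fun q => q j β) p i = if i = j then Pi.single β 1 else 0 := by
  funext a
  unfold gradBlock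
  have h : (fun q : Fin N → Fin 3 → ℝ => q j β) = fun q => proj2 N j β q := rfl
  rw [h, (proj2 N j β).fderiv]
  show (Pi.single i (Pi.single a (1:ℝ)) : Fin N → Fin 3 → ℝ) j β = _
  by_cases h1 : i = j <;> by_cases h2 : a = β <;>
    simp [Pi.single_apply, h1, h2, eq_comm]

lemma triple_swap (u v w : Fin 3 → ℝ) : u ⬝ᵥ (v ⨯₃ w) + v ⬝ᵥ (u ⨯₃ w) = 0 := by
  simp [cross_apply, dotProduct, Fin.sum_univ_three]
  ring


set_option maxHeartbeats 1000000 in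
/-- For `k = 1, …, N` the functions `C_k` are Casimir functions of `g^(N)`:
their Poisson bracket with every coordinate function `y_j^β` vanishes. -/
theorem stmt1 (N k : ℕ) (hk1 : 1 ≤ k) (hkN : k ≤ N) (j : Fin N) (β : Fin 3)
    (p : Fin N → (Fin 3 → ℝ)) :
    liePoisson N (CasN N k) (fun q => q j β) p = 0 := by
  unfold liePoisson
  have hjN := j.isLt
  have hcol : ∀ i : Fin N, (∑ j' : Fin N,
      if h : (i:ℕ) + (j':ℕ) < N then
        (p ⟨(i:ℕ) + (j':ℕ), h⟩) ⬝ᵥ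
          ((gradBlock N (CasN N k) p i) ⨯₃ (gradBlock N (fun q => q j β) p j'))
      else 0)
      = if h : (i:ℕ) + (j:ℕ) < N ∧ k ≤ (i:ℕ) + 1 then
          2 * ((p ⟨(i:ℕ) + (j:ℕ), h.1⟩) ⬝ᵥ
            ((p ⟨N + k - 2 - (i:ℕ), by omega⟩) ⨯₃ (Pi.single β 1)))
        else 0 := by
    intro i
    rw [Finset.sum_eq_single j]
    · rw [gradBlock_coord, if_pos rfl, gradBlock_CasN N k hk1 hkN]
      by_cases hi : k ≤ (i:ℕ) + 1
      · rw [dif_pos hi]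
        by_cases hij : (i:ℕ) + (j:ℕ) < N
        · rw [dif_pos hij, dif_pos (show _ ∧ _ from ⟨hij, hi⟩)]
          rw [LinearMap.map_smul, LinearMap.smul_apply, dotProduct_smul]
          simp [smul_eq_mul]
        · rw [dif_neg hij, dif_neg (show ¬(_ ∧ _) from fun hc => hij hc.1)]
      · rw [dif_neg hi, dif_neg (show ¬(_ ∧ _) from fun hc => hi hc.2)]
        split_ifs with hij
        · simp
        · rfl
    · intro b _ hb
      rw [gradBlock_coord, if_neg hb]
      split_ifs with h
      · simp
      · rfl
    · intro h; exact absurd (Finset.mem_univ j) h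
  rw [Finset.sum_congr rfl fun i _ => hcol i]
  refine Finset.sum_ninvolution
    (fun i => if h : (i:ℕ) + (j:ℕ) < N ∧ k ≤ (i:ℕ) + 1 then
      (⟨N + k - 2 - (j:ℕ) - (i:ℕ), by omega⟩ : Fin N) else i) ?_ ?_ ?_ ?_
  · intro i
    by_cases h : (i:ℕ) + (j:ℕ) < N ∧ k ≤ (i:ℕ) + 1
    · have hiN := i.isLt
      have hb1 : N + k - 2 - (j:ℕ) - (i:ℕ) + (j:ℕ) < N := by omega
      have hb2 : k ≤ N + k - 2 - (j:ℕ) - (i:ℕ) + 1 := by omega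
      rw [dif_pos h, dif_pos h, dif_pos (show _ ∧ _ from ⟨hb1, hb2⟩)]
      have e1 : (⟨N + k - 2 - (j:ℕ) - (i:ℕ) + (j:ℕ), hb1⟩ : Fin N)
          = ⟨N + k - 2 - (i:ℕ), by omega⟩ := by
        apply Fin.ext
        show N + k - 2 - (j:ℕ) - (i:ℕ) + (j:ℕ) = N + k - 2 - (i:ℕ)
        omega
      have e2 : (⟨N + k - 2 - (N + k - 2 - (j:ℕ) - (i:ℕ)), by omega⟩ : Fin N)
          = ⟨(i:ℕ) + (j:ℕ), h.1⟩ := by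
        apply Fin.ext
        show N + k - 2 - (N + k - 2 - (j:ℕ) - (i:ℕ)) = (i:ℕ) + (j:ℕ)
        omega
      rw [e1, e2]
      have hts := triple_swap (p ⟨(i:ℕ) + (j:ℕ), h.1⟩)
        (p ⟨N + k - 2 - (i:ℕ), by omega⟩) (Pi.single β 1)
      linarith
    · rw [dif_neg h, dif_neg h, dif_neg h]
      simp
  · intro i hFi
    by_cases h : (i:ℕ) + (j:ℕ) < N ∧ k ≤ (i:ℕ) + 1
    · rw [dif_pos h]
      intro hgi
      apply hFi
      have hval : N + k - 2 - (j:ℕ) - (i:ℕ) = (i:ℕ) := congrArg Fin.val hgi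
      have hidx : (⟨N + k - 2 - (i:ℕ), by omega⟩ : Fin N)
          = ⟨(i:ℕ) + (j:ℕ), h.1⟩ := by
        apply Fin.ext
        show N + k - 2 - (i:ℕ) = (i:ℕ) + (j:ℕ)
        omega
      rw [dif_pos h, hidx, dot_self_cross, mul_zero]
    · exact absurd (dif_neg h) hFi
  · intro i; exact Finset.mem_univ _
  · intro i
    by_cases h : (i:ℕ) + (j:ℕ) < N ∧ k ≤ (i:ℕ) + 1
    · have hiN := i.isLt
      have hb1 : N + k - 2 - (j:ℕ) - (i:ℕ) + (j:ℕ) < N := by omega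
      have hb2 : k ≤ N + k - 2 - (j:ℕ) - (i:ℕ) + 1 := by omega
      rw [dif_pos h, dif_pos (show _ ∧ _ from ⟨hb1, hb2⟩)]
      apply Fin.ext
      show N + k - 2 - (j:ℕ) - (N + k - 2 - (j:ℕ) - (i:ℕ)) = (i:ℕ)
      omega
    · rw [dif_neg h, dif_neg h]
end
end

section
/- The quantities H_1 = 2⟨b,y⟩, H_2 = ⟨y,y⟩ + 2⟨b,x⟩, and H_3 = 2(⟨b,z⟩ + ⟨y,x⟩) are conserved along the flow ẏ = b∧x, ẋ = y∧x + b∧z, ż = y∧z: their time derivatives along this vector field vanish identically. -/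
open Matrix

noncomputable section

private lemma comp_apply {f : ℝ → Fin 3 → ℝ} {f' : Fin 3 → ℝ} {t : ℝ}
    (hf : HasDerivAt f f' t) (i : Fin 3) :
    HasDerivAt (fun s => f s i) (f' i) t := by
  have := ((ContinuousLinearMap.proj i : (Fin 3 → ℝ) →L[ℝ] ℝ).hasFDerivAt.comp t
    hf.hasFDerivAt).hasDerivAt
  exact hasDerivAt_pi.1 hf i

private lemma dot_deriv {f g : ℝ → Fin 3 → ℝ} {f' g' : Fin 3 → ℝ} {t : ℝ}
    (hf : HasDerivAt f f' t) (hg : HasDerivAt g g' t) :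
    HasDerivAt (fun s => f s ⬝ᵥ g s) (f' ⬝ᵥ g t + f t ⬝ᵥ g') t := by
  simp only [dotProduct, Fin.sum_univ_three]
  have h : ∀ i : Fin 3, HasDerivAt (fun s => f s i * g s i)
      (f' i * g t i + f t i * g' i) t :=
    fun i => (comp_apply hf i).mul (comp_apply hg i)
  have := ((h 0).add (h 1)).add (h 2)
  refine this.congr_deriv ?_
  ring

/-- `H₁ = 2⟨b,y⟩`, `H₂ = ⟨y,y⟩ + 2⟨b,x⟩`, `H₃ = 2(⟨b,z⟩ + ⟨y,x⟩)` are conserved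
along the flow `ẏ = b∧x`, `ẋ = y∧x + b∧z`, `ż = y∧z`. -/
theorem stmt5 (b : Fin 3 → ℝ) (y x z : ℝ → (Fin 3 → ℝ))
    (hy : ∀ t, HasDerivAt y (b ⨯₃ x t) t)
    (hx : ∀ t, HasDerivAt x (y t ⨯₃ x t + b ⨯₃ z t) t)
    (hz : ∀ t, HasDerivAt z (y t ⨯₃ z t) t) :
    (∀ t, HasDerivAt (fun s => 2 * (b ⬝ᵥ y s)) 0 t) ∧
    (∀ t, HasDerivAt (fun s => y s ⬝ᵥ y s + 2 * (b ⬝ᵥ x s)) 0 t) ∧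
    (∀ t, HasDerivAt (fun s => 2 * (b ⬝ᵥ z s + y s ⬝ᵥ x s)) 0 t) := by
  have hb : ∀ t : ℝ, HasDerivAt (fun _ : ℝ => b) (0 : Fin 3 → ℝ) t := fun t =>
    hasDerivAt_const t b
  refine ⟨fun t => ?_, fun t => ?_, fun t => ?_⟩
  · have := ((dot_deriv (hb t) (hy t)).const_mul 2)
    refine this.congr_deriv ?_
    simp [crossProduct, dotProduct, Fin.sum_univ_three]
    ring
  · have := (dot_deriv (hy t) (hy t)).add ((dot_deriv (hb t) (hx t)).const_mul 2)
    refine this.congr_deriv ?_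
    simp [crossProduct, dotProduct, Fin.sum_univ_three]
    ring
  · have := (((dot_deriv (hb t) (hz t)).add (dot_deriv (hy t) (hx t))).const_mul 2)
    refine this.congr_deriv ?_
    simp [crossProduct, dotProduct, Fin.sum_univ_three]
    ring
end
end
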